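/- For j ≥ 6 let ρ_j be the unique real solution in (0,1) of σ_j(z) = 1, where σ_j(z) = σ(z) - z^j/(1-z^j), and let ρ be the unique real solution of σ(z) = 1 in (0,1). Then, as j → ∞, -1/σ_j'(ρ_j) = -1/σ'(ρ) + O(j ρ^j); that is, there is a constant C such that |1/σ_j'(ρ_j) - 1/σ'(ρ)| ≤ C j ρ^j for all j ≥ 6. -/

import Mathlib

/-- `σ(z) = ∑_{ℓ≥1} (-1)^{ℓ-1} z^ℓ/(1-z^ℓ)` for real `z`. -/
noncomputable def sigmaFn (z : ℝ) : ℝ :=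
  ∑' ℓ : ℕ, (-1 : ℝ) ^ ℓ * z ^ (ℓ + 1) / (1 - z ^ (ℓ + 1))

/-- `σ_j(z) = σ(z) - z^j/(1-z^j)`. -/
noncomputable def sigmaJFn (j : ℕ) (z : ℝ) : ℝ :=
  sigmaFn z - z ^ j / (1 - z ^ j)

open Set Filter

noncomputable def raG (n : ℕ) (z : ℝ) : ℝ := z ^ (n+1) / (1 + z ^ (n+1))

noncomputable def raTau (z : ℝ) : ℝ := ∑' n : ℕ, raG n z

lemma ra_summable_pow {z : ℝ} (h0 : 0 ≤ z) (h1 : z < 1) :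
    Summable (fun n : ℕ => z ^ (n+1)) :=
  ((summable_geometric_of_lt_one h0 h1).mul_left z).congr
    (fun n => (pow_succ' z n).symm)

lemma raG_nonneg {n : ℕ} {z : ℝ} (h0 : 0 ≤ z) : 0 ≤ raG n z := by
  unfold raG
  have h : (0:ℝ) < 1 + z ^ (n+1) := by nlinarith [pow_nonneg h0 (n+1)]
  positivity

lemma raG_le {n : ℕ} {z : ℝ} (h0 : 0 ≤ z) : raG n z ≤ z ^ (n+1) := by
  unfold raG
  have h : (1:ℝ) ≤ 1 + z ^ (n+1) := by nlinarith [pow_nonneg h0 (n+1)]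
  exact div_le_self (pow_nonneg h0 _) h

lemma raG_ge {n : ℕ} {z : ℝ} (h0 : 0 ≤ z) (h1 : z ≤ 1) : z ^ (n+1) / 2 ≤ raG n z := by
  unfold raG
  have hp : (0:ℝ) < 1 + z ^ (n+1) := by nlinarith [pow_nonneg h0 (n+1)]
  rw [div_le_div_iff₀ (by norm_num) hp]
  nlinarith [pow_nonneg h0 (n+1), pow_le_one₀ h0 h1 (n := n+1)]

lemma ra_summable_G {z : ℝ} (h0 : 0 ≤ z) (h1 : z < 1) : Summable (fun n : ℕ => raG n z) :=
  Summable.of_nonneg_of_le (fun _ => raG_nonneg h0) (fun _ => raG_le h0) (ra_summable_pow h0 h1)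

lemma ra_tsum_pow {z : ℝ} (h0 : 0 ≤ z) (h1 : z < 1) :
    ∑' n : ℕ, z ^ (n+1) = z / (1 - z) := by
  have : ∀ n : ℕ, z ^ (n+1) = z * z ^ n := fun n => pow_succ' z n
  rw [tsum_congr this, tsum_mul_left, tsum_geometric_of_lt_one h0 h1, div_eq_mul_inv]

lemma raTau_le {z : ℝ} (h0 : 0 ≤ z) (h1 : z < 1) : raTau z ≤ z / (1 - z) := by
  rw [← ra_tsum_pow h0 h1]
  exact Summable.tsum_le_tsum (fun n => raG_le h0) (ra_summable_G h0 h1) (ra_summable_pow h0 h1)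

lemma raTau_ge {z : ℝ} (h0 : 0 ≤ z) (h1 : z < 1) : z / (2 * (1 - z)) ≤ raTau z := by
  have h2 : ∑' n : ℕ, z ^ (n+1) / 2 = z / (1 - z) / 2 := by
    rw [tsum_div_const, ra_tsum_pow h0 h1]
  have h3 : z / (1 - z) / 2 = z / (2 * (1 - z)) := by rw [div_div, mul_comm]
  rw [← h3, ← h2]
  exact Summable.tsum_le_tsum (fun n => raG_ge h0 h1.le) ((ra_summable_pow h0 h1).div_const 2)
    (ra_summable_G h0 h1)

lemma ra_inner_geom {w : ℝ} (h0 : 0 ≤ w) (h1 : w < 1) :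
    ∑' k : ℕ, w ^ (k+1) = w / (1 - w) := ra_tsum_pow h0 h1

lemma ra_inner_geom_alt {w : ℝ} (h0 : 0 ≤ w) (h1 : w < 1) :
    ∑' k : ℕ, (-1:ℝ) ^ k * w ^ (k+1) = w / (1 + w) := by
  have habs : ‖(-w)‖ < 1 := by
    rw [norm_neg, Real.norm_of_nonneg h0]; exact h1
  have he : ∀ k : ℕ, (-1:ℝ) ^ k * w ^ (k+1) = w * (-w) ^ k := by
    intro k; rw [neg_pow]; ring
  rw [tsum_congr he, tsum_mul_left, tsum_geometric_of_norm_lt_one habs,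
    sub_neg_eq_add, div_eq_mul_inv]

lemma ra_exp_le {ℓ k : ℕ} : ℓ + 1 + k ≤ (ℓ+1) * (k+1) := by
  have h : k ≤ (ℓ+1) * k := Nat.le_mul_of_pos_left k ℓ.succ_pos
  have h2 : (ℓ+1) * (k+1) = (ℓ+1) * k + (ℓ+1) := Nat.mul_succ _ _
  omega

lemma ra_summable_F {z : ℝ} (h0 : 0 ≤ z) (h1 : z < 1) :
    Summable (fun p : ℕ × ℕ => (-1:ℝ) ^ p.1 * z ^ ((p.1+1) * (p.2+1))) := by
  have hmaj : Summable (fun p : ℕ × ℕ => z ^ (p.1+1) * z ^ p.2) :=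
    (ra_summable_pow h0 h1).mul_of_nonneg (summable_geometric_of_lt_one h0 h1)
      (fun n => pow_nonneg h0 _) (fun n => pow_nonneg h0 _)
  refine Summable.of_norm_bounded hmaj ?_
  rintro ⟨ℓ, k⟩
  have h1' : ‖(-1:ℝ) ^ ℓ * z ^ ((ℓ+1) * (k+1))‖ = z ^ ((ℓ+1) * (k+1)) := by
    rw [norm_mul, norm_pow, norm_neg, norm_one, one_pow, one_mul,
      Real.norm_of_nonneg (pow_nonneg h0 _)]
  rw [h1']
  calc z ^ ((ℓ+1) * (k+1)) ≤ z ^ (ℓ + 1 + k) :=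
        pow_le_pow_of_le_one h0 h1.le ra_exp_le
    _ = z ^ (ℓ+1) * z ^ k := pow_add z _ _

lemma ra_sigma_eq_tau {z : ℝ} (h0 : 0 ≤ z) (h1 : z < 1) : sigmaFn z = raTau z := by
  have hF := ra_summable_F h0 h1
  set F : ℕ × ℕ → ℝ := fun p => (-1:ℝ) ^ p.1 * z ^ ((p.1+1) * (p.2+1)) with hFdef
  have hwpow : ∀ m : ℕ, 0 ≤ z ^ (m+1) ∧ z ^ (m+1) < 1 := fun m =>
    ⟨pow_nonneg h0 _, pow_lt_one₀ h0 h1 (Nat.succ_ne_zero m)⟩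
  have hrow : ∀ ℓ : ℕ, Summable (fun k : ℕ => F (ℓ, k)) := by
    intro ℓ
    have he : ∀ k : ℕ, F (ℓ, k) = (-1:ℝ) ^ ℓ * (z ^ (ℓ+1)) ^ (k+1) := by
      intro k; simp only [hFdef, pow_mul]
    rw [funext he]
    exact (ra_summable_pow (hwpow ℓ).1 (hwpow ℓ).2).mul_left _
  have hcol : ∀ n : ℕ, Summable (fun k : ℕ => F (k, n)) := by
    intro n
    have he : ∀ k : ℕ, F (k, n) = (-1:ℝ) ^ k * (z ^ (n+1)) ^ (k+1) := by
      intro k; simp only [hFdef]; rw [Nat.mul_comm (k+1) (n+1), pow_mul]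
    rw [funext he]
    refine Summable.of_norm_bounded (ra_summable_pow (hwpow n).1 (hwpow n).2) ?_
    intro k
    rw [norm_mul, norm_pow, norm_neg, norm_one, one_pow, one_mul,
      Real.norm_of_nonneg (pow_nonneg (hwpow n).1 _)]
  calc sigmaFn z = ∑' ℓ : ℕ, ∑' k : ℕ, F (ℓ, k) := by
        unfold sigmaFn
        refine tsum_congr fun ℓ => ?_
        have he : ∀ k : ℕ, F (ℓ, k) = (-1:ℝ) ^ ℓ * (z ^ (ℓ+1)) ^ (k+1) := by
          intro k; simp only [hFdef, pow_mul]
        rw [funext he, tsum_mul_left, ra_inner_geom (hwpow ℓ).1 (hwpow ℓ).2, mul_div_assoc]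
    _ = ∑' p : ℕ × ℕ, F p := (Summable.tsum_prod' hF fun ℓ => hrow ℓ).symm
    _ = ∑' p : ℕ × ℕ, F p.swap := ((Equiv.prodComm ℕ ℕ).tsum_eq (fun p => F p)).symm
    _ = ∑' n : ℕ, ∑' k : ℕ, F (k, n) := Summable.tsum_prod' hF.prod_symm (fun n => hcol n)
    _ = raTau z := by
        unfold raTau
        refine tsum_congr fun n => ?_
        have he : ∀ k : ℕ, F (k, n) = (-1:ℝ) ^ k * (z ^ (n+1)) ^ (k+1) := by
          intro k; simp only [hFdef]; rw [Nat.mul_comm (k+1) (n+1), pow_mul]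
        rw [funext he]
        have hgeo := ra_inner_geom_alt (hwpow n).1 (hwpow n).2
        simpa [raG] using hgeo

noncomputable def raGd (n : ℕ) (z : ℝ) : ℝ := ((n:ℝ)+1) * z ^ n / (1 + z ^ (n+1)) ^ 2

noncomputable def raTauD (z : ℝ) : ℝ := ∑' n : ℕ, raGd n z

lemma ra_hasDerivAt_G (n : ℕ) {z : ℝ} (h0 : 0 ≤ z) :
    HasDerivAt (raG n) (raGd n z) z := by
  have hden : (0:ℝ) < 1 + z ^ (n+1) := by nlinarith [pow_nonneg h0 (n+1)]
  have hp : HasDerivAt (fun z : ℝ => z ^ (n+1)) (((n:ℝ)+1) * z ^ n) z := by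
    have := hasDerivAt_pow (n+1) z
    simpa using this
  have hv : HasDerivAt (fun z : ℝ => 1 + z ^ (n+1)) (((n:ℝ)+1) * z ^ n) z := hp.const_add 1
  have hd := hp.div hv hden.ne'
  have heq : (((n:ℝ)+1) * z ^ n * (1 + z ^ (n+1)) - z ^ (n+1) * (((n:ℝ)+1) * z ^ n)) /
      (1 + z ^ (n+1)) ^ 2 = raGd n z := by
    unfold raGd
    field_simp
    ring
  rw [heq] at hd
  exact hd

lemma ra_Gd_nonneg {n : ℕ} {z : ℝ} (h0 : 0 ≤ z) : 0 ≤ raGd n z := by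
  unfold raGd
  have hden : (0:ℝ) < 1 + z ^ (n+1) := by nlinarith [pow_nonneg h0 (n+1)]
  positivity

lemma ra_Gd_le {n : ℕ} {z : ℝ} (h0 : 0 ≤ z) (h1 : z ≤ 24/25) :
    ‖raGd n z‖ ≤ ((n:ℝ)+1) * (24/25) ^ n := by
  rw [Real.norm_of_nonneg (ra_Gd_nonneg h0)]
  unfold raGd
  have hden : (1:ℝ) ≤ (1 + z ^ (n+1)) ^ 2 := by nlinarith [pow_nonneg h0 (n+1)]
  calc ((n:ℝ)+1) * z ^ n / (1 + z ^ (n+1)) ^ 2 ≤ ((n:ℝ)+1) * z ^ n :=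
        div_le_self (by positivity) hden
    _ ≤ ((n:ℝ)+1) * (24/25) ^ n := by
        have := pow_le_pow_left₀ h0 h1 n
        nlinarith [pow_nonneg h0 n]

lemma ra_summable_u1 : Summable (fun n : ℕ => ((n:ℝ)+1) * (24/25) ^ n) := by
  have h : ‖(24/25 : ℝ)‖ < 1 := by rw [Real.norm_of_nonneg (by norm_num)]; norm_num
  have s1 := summable_pow_mul_geometric_of_norm_lt_one 1 h
  have s0 := summable_geometric_of_lt_one (show (0:ℝ) ≤ 24/25 by norm_num) (by norm_num)
  exact (s1.add s0).congr (fun n => by push_cast; ring)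

lemma ra_hasDerivAt_tau {y : ℝ} (hy : y ∈ Set.Ioo (0:ℝ) (24/25)) :
    HasDerivAt raTau (raTauD y) y := by
  refine hasDerivAt_tsum_of_isPreconnected ra_summable_u1 isOpen_Ioo
    (convex_Ioo (0:ℝ) (24/25)).isPreconnected
    (fun n z hz => ra_hasDerivAt_G n hz.1.le)
    (fun n z hz => ra_Gd_le hz.1.le hz.2.le)
    (show (1/2 : ℝ) ∈ Set.Ioo (0:ℝ) (24/25) by constructor <;> norm_num)
    (ra_summable_G (by norm_num) (by norm_num)) hy

noncomputable def raGdd (n : ℕ) (z : ℝ) : ℝ :=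
  (((n:ℝ)+1) * ((n:ℝ) * z ^ (n-1)) * (1 + z ^ (n+1)) ^ 2 -
    ((n:ℝ)+1) * z ^ n * (2 * (1 + z ^ (n+1)) * (((n:ℝ)+1) * z ^ n))) /
  ((1 + z ^ (n+1)) ^ 2) ^ 2

noncomputable def raTauDD (z : ℝ) : ℝ := ∑' n : ℕ, raGdd n z

lemma ra_hasDerivAt_Gd (n : ℕ) {z : ℝ} (h0 : 0 ≤ z) :
    HasDerivAt (raGd n) (raGdd n z) z := by
  have hden : (0:ℝ) < 1 + z ^ (n+1) := by nlinarith [pow_nonneg h0 (n+1)]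
  have hden2 : (1 + z ^ (n+1)) ^ 2 ≠ 0 := by positivity
  have hu : HasDerivAt (fun z : ℝ => ((n:ℝ)+1) * z ^ n) (((n:ℝ)+1) * ((n:ℝ) * z ^ (n-1))) z :=
    (hasDerivAt_pow n z).const_mul _
  have hw : HasDerivAt (fun z : ℝ => 1 + z ^ (n+1)) (((n:ℝ)+1) * z ^ n) z := by
    have := hasDerivAt_pow (n+1) z
    simpa using (HasDerivAt.const_add 1 this)
  have hv : HasDerivAt (fun z : ℝ => (1 + z ^ (n+1)) ^ 2)
      (2 * (1 + z ^ (n+1)) * (((n:ℝ)+1) * z ^ n)) z := by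
    have h2 := hw.pow 2
    refine h2.congr_deriv ?_
    push_cast
    ring
  exact hu.div hv hden2

lemma ra_pow_aux1 {z : ℝ} (h0 : 0 ≤ z) (h1 : z ≤ 24/25) (n : ℕ) :
    (n:ℝ) * z ^ (n-1) ≤ (n:ℝ) * (25/24) * (24/25) ^ n := by
  cases n with
  | zero => simp
  | succ m =>
    have hz : z ^ m ≤ ((24:ℝ)/25) ^ m := pow_le_pow_left₀ h0 h1 m
    have hm : (0:ℝ) ≤ (m:ℝ)+1 := by positivity
    simp only [Nat.add_sub_cancel]
    push_cast
    calc ((m:ℝ)+1) * z ^ m ≤ ((m:ℝ)+1) * (24/25) ^ m := by nlinarith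
      _ = ((m:ℝ)+1) * (25/24) * (24/25) ^ (m+1) := by rw [pow_succ]; ring

lemma ra_Gdd_le {n : ℕ} {z : ℝ} (h0 : 0 ≤ z) (h1 : z ≤ 24/25) :
    ‖raGdd n z‖ ≤ 9 * ((n:ℝ)+1) ^ 2 * (24/25) ^ n := by
  have hzn : ∀ m : ℕ, 0 ≤ z ^ m := fun m => pow_nonneg h0 m
  have hz1 : z ≤ 1 := by linarith
  have hp1 : z ^ (n+1) ≤ 1 := pow_le_one₀ h0 hz1
  have hden : (0:ℝ) < 1 + z ^ (n+1) := by nlinarith [hzn (n+1)]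
  have h1t : (1:ℝ) ≤ 1 + z ^ (n+1) := by nlinarith [hzn (n+1)]
  have hden4 : (1:ℝ) ≤ ((1 + z ^ (n+1)) ^ 2) ^ 2 := one_le_pow₀ (one_le_pow₀ h1t)
  have hd2 : (1 + z ^ (n+1)) ^ 2 ≤ 4 := by nlinarith [hzn (n+1)]
  have hnum : ‖(((n:ℝ)+1) * ((n:ℝ) * z ^ (n-1)) * (1 + z ^ (n+1)) ^ 2 -
      ((n:ℝ)+1) * z ^ n * (2 * (1 + z ^ (n+1)) * (((n:ℝ)+1) * z ^ n)))‖ ≤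
      9 * ((n:ℝ)+1) ^ 2 * (24/25) ^ n := by
    have h1' := ra_pow_aux1 h0 h1 n
    have hA : ‖((n:ℝ)+1) * ((n:ℝ) * z ^ (n-1)) * (1 + z ^ (n+1)) ^ 2‖ ≤
        ((n:ℝ)+1) * ((n:ℝ) * (25/24) * (24/25) ^ n) * 4 := by
      rw [Real.norm_of_nonneg (by positivity)]
      have hstep : ((n:ℝ)+1) * ((n:ℝ) * z ^ (n-1)) ≤
          ((n:ℝ)+1) * ((n:ℝ) * (25/24) * (24/25) ^ n) :=
        mul_le_mul_of_nonneg_left h1' (by positivity)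
      exact mul_le_mul hstep hd2 (by positivity) (by positivity)
    have hB : ‖((n:ℝ)+1) * z ^ n * (2 * (1 + z ^ (n+1)) * (((n:ℝ)+1) * z ^ n))‖ ≤
        4 * ((n:ℝ)+1) ^ 2 * (24/25) ^ n := by
      rw [Real.norm_of_nonneg (by positivity)]
      have hzc : z ^ n ≤ (24/25) ^ n := pow_le_pow_left₀ h0 h1 n
      have hz1n : z ^ n ≤ 1 := pow_le_one₀ h0 hz1
      have h2d : 2 * (1 + z ^ (n+1)) ≤ 4 := by nlinarith [hzn (n+1)]
      have hzz : z ^ n * z ^ n ≤ (24/25) ^ n := by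
        calc z ^ n * z ^ n ≤ (24/25) ^ n * 1 := mul_le_mul hzc hz1n (hzn n) (by positivity)
          _ = (24/25) ^ n := mul_one _
      have e : ((n:ℝ)+1) * z ^ n * (2 * (1 + z ^ (n+1)) * (((n:ℝ)+1) * z ^ n)) =
          (2 * (1 + z ^ (n+1))) * (((n:ℝ)+1) ^ 2 * (z ^ n * z ^ n)) := by ring
      rw [e]
      calc (2 * (1 + z ^ (n+1))) * (((n:ℝ)+1) ^ 2 * (z ^ n * z ^ n)) ≤
            4 * (((n:ℝ)+1) ^ 2 * (24/25) ^ n) :=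
          mul_le_mul h2d (mul_le_mul_of_nonneg_left hzz (by positivity))
            (mul_nonneg (by positivity) (mul_nonneg (hzn n) (hzn n))) (by norm_num)
        _ = 4 * ((n:ℝ)+1) ^ 2 * (24/25) ^ n := by ring
    calc ‖_ - _‖ ≤ _ + _ := norm_sub_le _ _
      _ ≤ ((n:ℝ)+1) * ((n:ℝ) * (25/24) * (24/25) ^ n) * 4 + 4 * ((n:ℝ)+1) ^ 2 * (24/25) ^ n :=
          add_le_add hA hB
      _ ≤ 9 * ((n:ℝ)+1) ^ 2 * (24/25) ^ n := by
          have hc : (0:ℝ) ≤ (24/25) ^ n := by positivity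
          nlinarith [Nat.cast_nonneg (α := ℝ) n]
  unfold raGdd
  rw [norm_div]
  calc _ ≤ ‖(((n:ℝ)+1) * ((n:ℝ) * z ^ (n-1)) * (1 + z ^ (n+1)) ^ 2 -
      ((n:ℝ)+1) * z ^ n * (2 * (1 + z ^ (n+1)) * (((n:ℝ)+1) * z ^ n)))‖ := by
        apply div_le_self (norm_nonneg _)
        rwa [Real.norm_of_nonneg (by positivity)]
    _ ≤ _ := hnum

lemma ra_summable_u2 : Summable (fun n : ℕ => 9 * ((n:ℝ)+1) ^ 2 * (24/25) ^ n) := by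
  have h : ‖(24/25 : ℝ)‖ < 1 := by rw [Real.norm_of_nonneg (by norm_num)]; norm_num
  have s2 := summable_pow_mul_geometric_of_norm_lt_one 2 h
  have s1 := summable_pow_mul_geometric_of_norm_lt_one 1 h
  have s0 := summable_geometric_of_lt_one (show (0:ℝ) ≤ 24/25 by norm_num) (by norm_num)
  exact (((s2.add (s1.mul_left 2)).add s0).mul_left 9).congr (fun n => by push_cast; ring)

noncomputable def raU : ℝ := ∑' n : ℕ, 9 * ((n:ℝ)+1) ^ 2 * (24/25) ^ n

lemma ra_summable_Gd {z : ℝ} (h0 : 0 ≤ z) (h1 : z ≤ 24/25) :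
    Summable (fun n : ℕ => raGd n z) :=
  Summable.of_norm_bounded ra_summable_u1 (fun n => ra_Gd_le h0 h1)

lemma ra_hasDerivAt_tauD {y : ℝ} (hy : y ∈ Set.Ioo (0:ℝ) (24/25)) :
    HasDerivAt raTauD (raTauDD y) y := by
  refine hasDerivAt_tsum_of_isPreconnected ra_summable_u2 isOpen_Ioo
    (convex_Ioo (0:ℝ) (24/25)).isPreconnected
    (fun n z hz => ra_hasDerivAt_Gd n hz.1.le)
    (fun n z hz => ra_Gdd_le hz.1.le hz.2.le)
    (show (1/2 : ℝ) ∈ Set.Ioo (0:ℝ) (24/25) by constructor <;> norm_num)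
    (ra_summable_Gd (by norm_num) (by norm_num)) hy

lemma raU_nonneg : 0 ≤ raU :=
  tsum_nonneg (fun n => by positivity)

lemma ra_tauDD_le {z : ℝ} (hz : z ∈ Set.Ioo (0:ℝ) (24/25)) : ‖raTauDD z‖ ≤ raU := by
  unfold raTauDD raU
  calc ‖∑' n : ℕ, raGdd n z‖ ≤ ∑' n : ℕ, ‖raGdd n z‖ := by
        apply norm_tsum_le_tsum_norm
        exact Summable.of_nonneg_of_le (fun n => norm_nonneg _)
          (fun n => ra_Gdd_le hz.1.le hz.2.le) ra_summable_u2
    _ ≤ ∑' n : ℕ, 9 * ((n:ℝ)+1) ^ 2 * (24/25) ^ n :=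
        Summable.tsum_le_tsum (fun n => ra_Gdd_le hz.1.le hz.2.le)
          (Summable.of_nonneg_of_le (fun n => norm_nonneg _)
            (fun n => ra_Gdd_le hz.1.le hz.2.le) ra_summable_u2) ra_summable_u2

lemma ra_tauD_lip {x y : ℝ} (hx : x ∈ Set.Ioo (0:ℝ) (24/25)) (hy : y ∈ Set.Ioo (0:ℝ) (24/25)) :
    ‖raTauD y - raTauD x‖ ≤ raU * ‖y - x‖ :=
  Convex.norm_image_sub_le_of_norm_hasDerivWithin_le
    (fun z hz => (ra_hasDerivAt_tauD hz).hasDerivWithinAt)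
    (fun z hz => ra_tauDD_le hz) (convex_Ioo _ _) hx hy

lemma ra_tauD_ge {z : ℝ} (hz : z ∈ Set.Ioo (0:ℝ) (24/25)) : (1/4 : ℝ) ≤ raTauD z := by
  obtain ⟨h0, h1⟩ := hz
  have hsum : Summable (fun n : ℕ => raGd n z) := ra_summable_Gd h0.le h1.le
  have h00 : (1/4 : ℝ) ≤ raGd 0 z := by
    unfold raGd
    have hz1 : z ≤ 1 := by linarith
    have hd : (0:ℝ) < (1 + z ^ (0+1)) ^ 2 := by positivity
    have he : ((0:ℕ):ℝ) + 1 = 1 := by norm_num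
    rw [he, one_mul, pow_zero]
    rw [div_le_div_iff₀ (by norm_num) hd]
    have : z ^ (0+1) = z := pow_one z
    nlinarith
  calc (1/4 : ℝ) ≤ raGd 0 z := h00
    _ ≤ raTauD z := Summable.le_tsum hsum 0 (fun n _ => ra_Gd_nonneg h0.le)

lemma ra_key_mono : MonotoneOn (fun z => raTau z - z/4) (Set.Ioo (0:ℝ) (24/25)) := by
  have hderiv : ∀ z ∈ Set.Ioo (0:ℝ) (24/25),
      HasDerivAt (fun z => raTau z - z/4) (raTauD z - 1/4) z := by
    intro z hz
    exact (ra_hasDerivAt_tau hz).sub ((hasDerivAt_id z).div_const 4)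
  apply monotoneOn_of_deriv_nonneg (convex_Ioo _ _)
  · intro z hz
    exact (hderiv z hz).continuousAt.continuousWithinAt
  · intro z hz
    rw [interior_Ioo] at hz
    exact ((hderiv z hz).differentiableAt).differentiableWithinAt
  · intro z hz
    rw [interior_Ioo] at hz
    rw [(hderiv z hz).deriv]
    have := ra_tauD_ge hz
    linarith

lemma ra_quant_mono {x y : ℝ} (hx : x ∈ Set.Ioo (0:ℝ) (24/25)) (hy : y ∈ Set.Ioo (0:ℝ) (24/25))
    (hxy : x ≤ y) : (y - x)/4 ≤ raTau y - raTau x := by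
  have := ra_key_mono hx hy hxy
  simp only at this
  linarith

lemma ra_fj_le {j : ℕ} (hj : 6 ≤ j) {x : ℝ} (h0 : 0 < x) (h1 : x < 1) :
    x^j/(1-x^j) ≤ x/(6*(1-x)) := by
  have hx6 : x^j ≤ x^6 := pow_le_pow_of_le_one h0.le h1.le hj
  have h6lt : x^6 < 1 := pow_lt_one₀ h0.le h1 (by norm_num)
  have hjlt : x^j < 1 := lt_of_le_of_lt hx6 h6lt
  have step1 : x^j/(1-x^j) ≤ x^6/(1-x^6) :=
    div_le_div₀ (pow_nonneg h0.le 6) hx6 (by linarith) (by linarith)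
  have step2 : x^6/(1-x^6) ≤ x/(6*(1-x)) := by
    rw [div_le_div_iff₀ (by linarith) (by nlinarith)]
    have e0 : x^5 ≤ 1 := pow_le_one₀ h0.le h1.le
    have e1 : x^5 ≤ x := by
      calc x^5 ≤ x^1 := pow_le_pow_of_le_one h0.le h1.le (by norm_num)
        _ = x := pow_one x
    have e2 : x^5 ≤ x^2 := pow_le_pow_of_le_one h0.le h1.le (by norm_num)
    have e3 : x^5 ≤ x^3 := pow_le_pow_of_le_one h0.le h1.le (by norm_num)
    have e4 : x^5 ≤ x^4 := pow_le_pow_of_le_one h0.le h1.le (by norm_num)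
    have hsum : (0:ℝ) ≤ 1 + x + x^2 + x^3 + x^4 - 5*x^5 := by linarith
    nlinarith [mul_nonneg (mul_nonneg h0.le (sub_nonneg.2 h1.le)) hsum]
  linarith

lemma ra_root_lower {x : ℝ} (hx : x ∈ Set.Ioo (0:ℝ) 1) (h1 : 1 ≤ raTau x) : 1/3 ≤ x := by
  by_contra h
  push_neg at h
  have hup := raTau_le hx.1.le hx.2
  have : x/(1-x) ≤ (1/3)/(2/3) :=
    div_le_div₀ (by norm_num) h.le (by norm_num) (by linarith)
  norm_num at this
  linarith

lemma ra_rho_upper {x : ℝ} (hx : x ∈ Set.Ioo (0:ℝ) 1) (heq : raTau x = 1) : x ≤ 19/20 := by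
  by_contra h
  push_neg at h
  have hlow := raTau_ge hx.1.le hx.2
  have : (19/20 : ℝ)/(1/10) ≤ x/(2*(1-x)) :=
    div_le_div₀ hx.1.le h.le (by nlinarith [hx.2]) (by nlinarith [hx.2])
  norm_num at this
  linarith

lemma ra_rootJ_upper {j : ℕ} (hj : 6 ≤ j) {x : ℝ} (hx : x ∈ Set.Ioo (0:ℝ) 1)
    (heq : raTau x - x^j/(1-x^j) = 1) : x ≤ 19/20 := by
  by_contra h
  push_neg at h
  have h1x : (0:ℝ) < 1 - x := by linarith [hx.2]
  have hid : x/(2*(1-x)) - x/(6*(1-x)) = x/(3*(1-x)) := by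
    field_simp
    ring
  have hlow2 : (19/20 : ℝ)/(3/20) ≤ x/(3*(1-x)) :=
    div_le_div₀ hx.1.le h.le (by nlinarith) (by nlinarith)
  norm_num at hlow2
  have htau := raTau_ge hx.1.le hx.2
  have hf := ra_fj_le hj hx.1 hx.2
  linarith

lemma ra_j_q_le (j : ℕ) : (j:ℝ) * (19/20)^j ≤ 19 := by
  have h1 := one_add_mul_le_pow (show (-2:ℝ) ≤ 1/19 by norm_num) j
  have he : ((1:ℝ)+1/19) = 20/19 := by norm_num
  rw [he] at h1
  have hinv : ((19:ℝ)/20)^j * (20/19)^j = 1 := by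
    rw [← mul_pow]; norm_num
  have hqpos : (0:ℝ) ≤ (19/20)^j := by positivity
  have hj19 : (j:ℝ) ≤ 19 * (20/19)^j := by linarith
  nlinarith [mul_le_mul_of_nonneg_right hj19 hqpos]

lemma ra_j_p_le (j : ℕ) : (j:ℝ) * (39/40)^j ≤ 39 := by
  have h1 := one_add_mul_le_pow (show (-2:ℝ) ≤ 1/39 by norm_num) j
  have he : ((1:ℝ)+1/39) = 40/39 := by norm_num
  rw [he] at h1
  have hinv : ((39:ℝ)/40)^j * (40/39)^j = 1 := by
    rw [← mul_pow]; norm_num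
  have hqpos : (0:ℝ) ≤ (39/40)^j := by positivity
  have hj39 : (j:ℝ) ≤ 39 * (40/39)^j := by linarith
  nlinarith [mul_le_mul_of_nonneg_right hj39 hqpos]

lemma ra_q_le_pp (j : ℕ) : ((19:ℝ)/20)^j ≤ (39/40)^j * (39/40)^j := by
  rw [← mul_pow]
  exact pow_le_pow_left₀ (by norm_num) (by norm_num) j

lemma ra_exp_factor {j : ℕ} : (1 + 48*(19/20)^j)^j ≤ Real.exp 912 := by
  set a : ℝ := 48*(19/20)^j with ha
  have ha0 : 0 ≤ a := by rw [ha]; positivity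
  have h1 : 1 + a ≤ Real.exp a := by linarith [Real.add_one_le_exp a]
  have h2 : (1+a)^j ≤ (Real.exp a)^j := pow_le_pow_left₀ (by linarith) h1 j
  have h3 : (Real.exp a)^j = Real.exp ((j:ℝ)*a) := (Real.exp_nat_mul a j).symm
  have h4 : (j:ℝ)*a ≤ 912 := by
    have := ra_j_q_le j
    rw [ha]
    nlinarith
  calc (1+a)^j ≤ (Real.exp a)^j := h2
    _ = Real.exp ((j:ℝ)*a) := h3
    _ ≤ Real.exp 912 := Real.exp_le_exp.2 h4

set_option maxHeartbeats 2000000 in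
/-- With `ρ` the unique solution of `σ(z) = 1` in `(0,1)` and `ρ_j = r j` the
unique solution of `σ_j(z) = 1` in `(0,1)` for `j ≥ 6`, one has
`-1/σ_j'(ρ_j) = -1/σ'(ρ) + O(j ρ^j)`: there is a constant `C` with
`|1/σ_j'(ρ_j) - 1/σ'(ρ)| ≤ C j ρ^j` for all `j ≥ 6`. -/
theorem residue_asymptotics (ρ : ℝ)
    (hρ : ρ ∈ Set.Ioo (0 : ℝ) 1 ∧ sigmaFn ρ = 1)
    (hρu : ∀ x ∈ Set.Ioo (0 : ℝ) 1, sigmaFn x = 1 → x = ρ)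
    (r : ℕ → ℝ)
    (hr : ∀ j, 6 ≤ j → r j ∈ Set.Ioo (0 : ℝ) 1 ∧ sigmaJFn j (r j) = 1)
    (hru : ∀ j, 6 ≤ j → ∀ x ∈ Set.Ioo (0 : ℝ) 1, sigmaJFn j x = 1 → x = r j) :
    ∃ C : ℝ, ∀ j : ℕ, 6 ≤ j →
      |1 / deriv (sigmaJFn j) (r j) - 1 / deriv sigmaFn ρ| ≤ C * j * ρ ^ j := by
  obtain ⟨⟨hρ0, hρ1⟩, hσρ⟩ := hρ
  have hρτ : raTau ρ = 1 := by rw [← ra_sigma_eq_tau hρ0.le hρ1]; exact hσρ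
  have hρlo : 1/3 ≤ ρ := ra_root_lower ⟨hρ0, hρ1⟩ (le_of_eq hρτ.symm)
  have hρhi : ρ ≤ 19/20 := ra_rho_upper ⟨hρ0, hρ1⟩ hρτ
  have hρs : ρ ∈ Set.Ioo (0:ℝ) (24/25) := ⟨hρ0, by linarith⟩
  have hDρ : deriv sigmaFn ρ = raTauD ρ := by
    have hev : sigmaFn =ᶠ[nhds ρ] raTau :=
      Filter.eventuallyEq_of_mem (Ioo_mem_nhds hρ0 hρ1)
        (fun z hz => ra_sigma_eq_tau hz.1.le hz.2)
    rw [hev.deriv_eq, (ra_hasDerivAt_tau hρs).deriv]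
  have hD4 : (1/4:ℝ) ≤ raTauD ρ := ra_tauD_ge hρs
  set M : ℝ := Real.exp 912 with hM
  have hMpos : (0:ℝ) < M := Real.exp_pos _
  set C2 : ℝ := 16*raU*M + 48*M with hC2
  have hC2nonneg : 0 ≤ C2 := by nlinarith [raU_nonneg]
  -- per-j estimates
  have perj : ∀ j : ℕ, 6 ≤ j →
      |deriv (sigmaJFn j) (r j) - deriv sigmaFn ρ| ≤ C2*((j:ℝ)*ρ^j) ∧
      1/4 - 48*M*((j:ℝ)*(19/20)^j) ≤ deriv (sigmaJFn j) (r j) := by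
    intro j hj
    obtain ⟨⟨hx0, hx1⟩, hxeq⟩ := hr j hj
    set x := r j with hxdef
    have hτx : raTau x - x^j/(1-x^j) = 1 := by
      have h := hxeq
      unfold sigmaJFn at h
      rwa [ra_sigma_eq_tau hx0.le hx1] at h
    have hxhi : x ≤ 19/20 := ra_rootJ_upper hj ⟨hx0, hx1⟩ hτx
    have hxjq : x^j ≤ (19/20)^j := pow_le_pow_left₀ hx0.le hxhi j
    have hq6 : ((19:ℝ)/20)^j ≤ (19/20)^6 :=
      pow_le_pow_of_le_one (by norm_num) (by norm_num) hj
    have hq634 : ((19:ℝ)/20)^6 ≤ 3/4 := by norm_num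
    have hxj34 : x^j ≤ 3/4 := by linarith
    have hden : (1/4:ℝ) ≤ 1 - x^j := by linarith
    have hfj_nonneg : 0 ≤ x^j/(1-x^j) :=
      div_nonneg (pow_nonneg hx0.le j) (by linarith)
    have hτx' : raTau x = 1 + x^j/(1-x^j) := by linarith
    have hxlo : 1/3 ≤ x := ra_root_lower ⟨hx0, hx1⟩ (by linarith)
    have hxs : x ∈ Set.Ioo (0:ℝ) (24/25) := ⟨hx0, by linarith⟩
    have hρx : ρ ≤ x := by
      by_contra hc
      push_neg at hc
      have hmono := ra_quant_mono hxs hρs hc.le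
      rw [hρτ, hτx'] at hmono
      linarith
    have hgap : x - ρ ≤ 16 * x^j := by
      have h := ra_quant_mono hρs hxs hρx
      rw [hρτ, hτx'] at h
      have hf4 : x^j/(1-x^j) ≤ 4*x^j := by
        rw [div_le_iff₀ (by linarith)]
        have hh := mul_le_mul_of_nonneg_left hden (pow_nonneg hx0.le j)
        linarith
      linarith
    have hqj_nonneg : (0:ℝ) ≤ (19/20)^j := by positivity
    have hcrude : x ≤ ρ * (1 + 48*(19/20)^j) := by
      have h16 : x - ρ ≤ 16*(19/20)^j := by linarith
      have hh := mul_le_mul_of_nonneg_right hρlo hqj_nonneg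
      linarith
    have hboot : x^j ≤ M * ρ^j := by
      calc x^j ≤ (ρ*(1 + 48*(19/20)^j))^j := pow_le_pow_left₀ hx0.le hcrude j
        _ = ρ^j * (1 + 48*(19/20)^j)^j := mul_pow ρ _ j
        _ ≤ ρ^j * M := mul_le_mul_of_nonneg_left ra_exp_factor (pow_nonneg hρ0.le j)
        _ = M * ρ^j := mul_comm _ _
    have hgap2 : x - ρ ≤ 16*M*ρ^j := by linarith
    have hdenpos : (0:ℝ) < 1 - x^j := by linarith
    set fjd : ℝ := (j:ℝ)*x^(j-1)/(1-x^j)^2 with hfjd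
    have hfd : HasDerivAt (fun z : ℝ => z^j/(1-z^j)) fjd x := by
      have hpj := hasDerivAt_pow j x
      have hvj : HasDerivAt (fun z : ℝ => 1 - z^j) (-((j:ℝ)*x^(j-1))) x := hpj.const_sub 1
      have hd := hpj.div hvj hdenpos.ne'
      refine hd.congr_deriv ?_
      rw [hfjd]
      field_simp
      ring
    have hds : HasDerivAt (fun z => raTau z - z^j/(1-z^j)) (raTauD x - fjd) x :=
      (ra_hasDerivAt_tau hxs).sub hfd
    have hevj : sigmaJFn j =ᶠ[nhds x] (fun z => raTau z - z^j/(1-z^j)) :=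
      Filter.eventuallyEq_of_mem (Ioo_mem_nhds hx0 hx1)
        (fun z hz => by unfold sigmaJFn; rw [ra_sigma_eq_tau hz.1.le hz.2])
    have hDj : deriv (sigmaJFn j) x = raTauD x - fjd := by
      rw [hevj.deriv_eq, hds.deriv]
    have hxj1 : x^(j-1) ≤ 3*x^j := by
      have hee : x^j = x^(j-1)*x := by
        conv_lhs => rw [show j = (j-1)+1 by omega]
        rw [pow_succ]
      have hh := mul_le_mul_of_nonneg_left hxlo (pow_nonneg hx0.le (j-1))
      rw [hee]
      linarith
    have hfjd_nonneg : 0 ≤ fjd := by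
      rw [hfjd]
      positivity
    have hjcast : (0:ℝ) ≤ (j:ℝ) := Nat.cast_nonneg j
    have hfjd_le : fjd ≤ 48*M*((j:ℝ)*ρ^j) := by
      rw [hfjd]
      have hsq : (1/16:ℝ) ≤ (1-x^j)^2 := by
        calc (1/16:ℝ) = (1/4)*(1/4) := by norm_num
          _ ≤ (1-x^j)*(1-x^j) := mul_le_mul hden hden (by norm_num) (by linarith)
          _ = (1-x^j)^2 := (sq _).symm
      have hjx_nonneg : (0:ℝ) ≤ (j:ℝ)*x^(j-1) := mul_nonneg hjcast (pow_nonneg hx0.le (j-1))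
      have h16 : (j:ℝ)*x^(j-1)/(1-x^j)^2 ≤ 16*((j:ℝ)*x^(j-1)) := by
        rw [div_le_iff₀ (pow_pos hdenpos 2)]
        have hh := mul_le_mul_of_nonneg_left hsq hjx_nonneg
        linarith
      have h3x : (j:ℝ)*x^(j-1) ≤ 3*((j:ℝ)*x^j) := by
        have := mul_le_mul_of_nonneg_left hxj1 hjcast
        linarith
      have h2 : (j:ℝ)*x^j ≤ (j:ℝ)*(M*ρ^j) := mul_le_mul_of_nonneg_left hboot hjcast
      linarith
    have hlip : |raTauD x - raTauD ρ| ≤ raU*(x-ρ) := by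
      have hl := ra_tauD_lip hρs hxs
      rw [Real.norm_eq_abs, Real.norm_eq_abs] at hl
      rwa [abs_of_nonneg (by linarith : (0:ℝ) ≤ x - ρ)] at hl
    have hρjpow : (0:ℝ) ≤ ρ^j := pow_nonneg hρ0.le j
    have hj1 : (1:ℝ) ≤ (j:ℝ) := by
      have : (6:ℝ) ≤ (j:ℝ) := by exact_mod_cast hj
      linarith
    constructor
    · rw [hDj, hDρ]
      have h1 : |raTauD x - fjd - raTauD ρ| ≤ |raTauD x - raTauD ρ| + fjd := by
        calc |raTauD x - fjd - raTauD ρ|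
            = |(raTauD x - raTauD ρ) + (-fjd)| := by
              rw [show raTauD x - fjd - raTauD ρ = (raTauD x - raTauD ρ) + (-fjd) by ring]
          _ ≤ |raTauD x - raTauD ρ| + |(-fjd)| := abs_add_le _ _
          _ = |raTauD x - raTauD ρ| + fjd := by rw [abs_neg, abs_of_nonneg hfjd_nonneg]
      have h2 : raU*(x-ρ) ≤ raU*(16*M*ρ^j) := mul_le_mul_of_nonneg_left hgap2 raU_nonneg
      have h3 : raU*(16*M*ρ^j) ≤ 16*raU*M*((j:ℝ)*ρ^j) := by
        have hh := mul_nonneg (mul_nonneg (mul_nonneg raU_nonneg hMpos.le) hρjpow)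
          (sub_nonneg.2 hj1)
        linarith
      calc |raTauD x - fjd - raTauD ρ| ≤ |raTauD x - raTauD ρ| + fjd := h1
        _ ≤ raU*(x-ρ) + 48*M*((j:ℝ)*ρ^j) := add_le_add hlip hfjd_le
        _ ≤ 16*raU*M*((j:ℝ)*ρ^j) + 48*M*((j:ℝ)*ρ^j) := by linarith
        _ = C2*((j:ℝ)*ρ^j) := by rw [hC2]; ring
    · rw [hDj]
      have h1 := ra_tauD_ge hxs
      have h2 : fjd ≤ 48*M*((j:ℝ)*(19/20)^j) := by
        refine hfjd_le.trans ?_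
        have hq : ρ^j ≤ (19/20)^j := pow_le_pow_left₀ hρ0.le hρhi j
        have hh := mul_le_mul_of_nonneg_left (mul_le_mul_of_nonneg_left hq hjcast)
          (show (0:ℝ) ≤ 48*M by linarith)
        linarith
      linarith
  -- choice of the tail threshold
  have hd1 : (0:ℝ) < 48*M*39+1 := by nlinarith
  set ε : ℝ := (1/8)/(48*M*39+1) with hε
  have hεpos : 0 < ε := by
    rw [hε]
    exact div_pos (by norm_num) hd1
  obtain ⟨J, hJ⟩ := exists_pow_lt_of_lt_one hεpos (show (39:ℝ)/40 < 1 by norm_num)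
  have tailsmall : ∀ j : ℕ, J ≤ j → 48*M*((j:ℝ)*(19/20)^j) ≤ 1/8 := by
    intro j hJj
    have hqp := ra_q_le_pp j
    have hjple := ra_j_p_le j
    have hpj : ((39:ℝ)/40)^j ≤ (39/40)^J :=
      pow_le_pow_of_le_one (by norm_num) (by norm_num) hJj
    have hpos : (0:ℝ) ≤ (39/40)^j := by positivity
    have hjcast : (0:ℝ) ≤ (j:ℝ) := Nat.cast_nonneg j
    have h1 : (j:ℝ)*(19/20)^j ≤ 39*(39/40)^j := by
      have ha := mul_le_mul_of_nonneg_right hjple hpos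
      have hb := mul_le_mul_of_nonneg_left hqp hjcast
      linarith
    have h2 : ((39:ℝ)/40)^j ≤ ε := by linarith [hJ]
    have h3 : (j:ℝ)*(19/20)^j ≤ 39*ε := by linarith
    have e : (48*M*39+1)*ε = 1/8 := by
      rw [hε]
      field_simp
    have h4 := mul_le_mul_of_nonneg_left h3 (show (0:ℝ) ≤ 48*M by linarith)
    linarith [hεpos.le]
  -- final constant
  set J6 : ℕ := max J 6 with hJ6
  set Ctail : ℝ := 32*C2 with hCtail
  set Cfin : ℝ := Ctail + ∑ i ∈ Finset.range J6,
    |1/deriv (sigmaJFn i) (r i) - 1/deriv sigmaFn ρ| / ((i:ℝ)*ρ^i) with hCfin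
  have hsum_nonneg : 0 ≤ ∑ i ∈ Finset.range J6,
      |1/deriv (sigmaJFn i) (r i) - 1/deriv sigmaFn ρ| / ((i:ℝ)*ρ^i) :=
    Finset.sum_nonneg (fun i _ => div_nonneg (abs_nonneg _)
      (mul_nonneg (Nat.cast_nonneg i) (pow_nonneg hρ0.le i)))
  refine ⟨Cfin, fun j hj => ?_⟩
  have hρjpos : (0:ℝ) < ρ^j := pow_pos hρ0 j
  have hjpos : (0:ℝ) < (j:ℝ) := by
    have : (6:ℝ) ≤ (j:ℝ) := by exact_mod_cast hj
    linarith
  by_cases hcase : J6 ≤ j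
  · have hJj : J ≤ j := le_trans (le_max_left _ _) hcase
    obtain ⟨est, lowb⟩ := perj j hj
    have hsm := tailsmall j hJj
    have hDjlow : (1/8:ℝ) ≤ deriv (sigmaJFn j) (r j) := by linarith
    have hDlow : (1/4:ℝ) ≤ deriv sigmaFn ρ := by rw [hDρ]; exact hD4
    have hkey : |1/deriv (sigmaJFn j) (r j) - 1/deriv sigmaFn ρ| ≤
        32*|deriv (sigmaJFn j) (r j) - deriv sigmaFn ρ| := by
      set a := deriv (sigmaJFn j) (r j) with hadef
      set b := deriv sigmaFn ρ with hbdef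
      have hapos : 0 < a := lt_of_lt_of_le (by norm_num) hDjlow
      have hbpos : 0 < b := lt_of_lt_of_le (by norm_num) hDlow
      have e : 1/a - 1/b = (b - a)/(a*b) := by
        field_simp
      rw [e, abs_div, abs_of_pos (mul_pos hapos hbpos), abs_sub_comm,
        div_le_iff₀ (mul_pos hapos hbpos)]
      have h32 : (1:ℝ)/32 ≤ a*b := by nlinarith [hDjlow, hDlow, mul_le_mul hDjlow hDlow (by norm_num) (by linarith)]
      have hprod := mul_nonneg (abs_nonneg (a-b)) (sub_nonneg.2 h32)
      linarith
    have hCt : Ctail ≤ Cfin := by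
      rw [hCfin]
      linarith
    calc |1/deriv (sigmaJFn j) (r j) - 1/deriv sigmaFn ρ|
        ≤ 32*|deriv (sigmaJFn j) (r j) - deriv sigmaFn ρ| := hkey
      _ ≤ 32*(C2*((j:ℝ)*ρ^j)) := mul_le_mul_of_nonneg_left est (by norm_num)
      _ = Ctail*((j:ℝ)*ρ^j) := by rw [hCtail]; ring
      _ ≤ Cfin*((j:ℝ)*ρ^j) :=
          mul_le_mul_of_nonneg_right hCt (mul_pos hjpos hρjpos).le
      _ = Cfin*(j:ℝ)*ρ^j := by ring
  · push_neg at hcase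
    have hmem : j ∈ Finset.range J6 := Finset.mem_range.2 hcase
    have hsingle : |1/deriv (sigmaJFn j) (r j) - 1/deriv sigmaFn ρ| / ((j:ℝ)*ρ^j) ≤
        ∑ i ∈ Finset.range J6,
          |1/deriv (sigmaJFn i) (r i) - 1/deriv sigmaFn ρ| / ((i:ℝ)*ρ^i) :=
      Finset.single_le_sum
        (f := fun i => |1/deriv (sigmaJFn i) (r i) - 1/deriv sigmaFn ρ| / ((i:ℝ)*ρ^i))
        (fun i _ => div_nonneg (abs_nonneg _)
          (mul_nonneg (Nat.cast_nonneg i) (pow_nonneg hρ0.le i))) hmem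
    have hCt0 : (0:ℝ) ≤ Ctail := by rw [hCtail]; linarith
    have hpos : (0:ℝ) < (j:ℝ)*ρ^j := mul_pos hjpos hρjpos
    have hfin : |1/deriv (sigmaJFn j) (r j) - 1/deriv sigmaFn ρ| ≤ Cfin*((j:ℝ)*ρ^j) := by
      rw [div_le_iff₀ hpos] at hsingle
      have hle : (∑ i ∈ Finset.range J6,
          |1/deriv (sigmaJFn i) (r i) - 1/deriv sigmaFn ρ| / ((i:ℝ)*ρ^i)) ≤ Cfin := by
        rw [hCfin]; linarith
      calc |1/deriv (sigmaJFn j) (r j) - 1/deriv sigmaFn ρ|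
          ≤ (∑ i ∈ Finset.range J6,
            |1/deriv (sigmaJFn i) (r i) - 1/deriv sigmaFn ρ| / ((i:ℝ)*ρ^i))*((j:ℝ)*ρ^j) :=
            hsingle
        _ ≤ Cfin*((j:ℝ)*ρ^j) := mul_le_mul_of_nonneg_right hle hpos.le
    calc |1/deriv (sigmaJFn j) (r j) - 1/deriv sigmaFn ρ| ≤ Cfin*((j:ℝ)*ρ^j) := hfin
      _ = Cfin*(j:ℝ)*ρ^j := by ring
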